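/- There is no polynomial q of degree at most d+1 with q(x) = A_d(p) for some polynomial p of degree at most d such that A_d(p) = x^{d+1} + x^d. That is, x^{d+1} + x^d is not in the image of A_d for d ≥ 1. -/
import Mathlib

open Polynomial

noncomputable def P : ℕ → Polynomial ℝ
  | 0 => 1
  | 1 => 1 + Polynomial.X
  | n + 2 => P (n + 1) + Polynomial.X * P n

/-- `Amon d k` is the value of the linear map `A_d` on the monomial `x^k`. -/
noncomputable def Amon : ℕ → ℕ → Polynomial ℝ
  | 0, 0 => 1 + 2 * Polynomial.X
  | 0, _ + 1 => 0
  | d + 1, k + 1 => Polynomial.X * Amon d k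
  | d + 1, 0 =>
      P (2 * d + 3) -
        ∑ k ∈ Finset.range (d + 1),
          Polynomial.C ((P (2 * d + 1)).coeff (k + 1)) * (Polynomial.X * Amon d k)

/-- The linear map `A_d` applied to a polynomial of degree at most `d`. -/
noncomputable def Aap (d : ℕ) (p : Polynomial ℝ) : Polynomial ℝ :=
  ∑ k ∈ Finset.range (d + 1), Polynomial.C (p.coeff k) * Amon d k

/- ### Auxiliary development -/

lemma cat_even (n : ℕ) :
    catalan n + Nat.choose (2 * n) (n + 1) = Nat.choose (2 * n) n := by
  apply Nat.eq_of_mul_eq_mul_left (show 0 < n + 1 by omega)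
  have h1 := succ_mul_catalan_eq_centralBinom n
  have h2 := Nat.choose_succ_right_eq (2 * n) n
  have h3 : 2 * n - n = n := by omega
  rw [h3] at h2
  have hc : Nat.centralBinom n = Nat.choose (2 * n) n := rfl
  rw [hc] at h1
  zify at h1 h2 ⊢
  linear_combination h1 + h2

lemma cat_odd (n : ℕ) :
    catalan (n + 1) + Nat.choose (2 * n + 1) (n + 2) = Nat.choose (2 * n + 1) (n + 1) := by
  have h := cat_even (n + 1)
  have e1 : 2 * (n + 1) = (2 * n + 1) + 1 := by ring
  rw [e1] at h
  rw [Nat.choose_succ_succ (2 * n + 1) (n + 1)] at h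
  rw [Nat.choose_succ_succ (2 * n + 1) n] at h
  have hsym : Nat.choose (2 * n + 1) n = Nat.choose (2 * n + 1) (n + 1) := by
    have h4 := Nat.choose_symm (show n + 1 ≤ 2 * n + 1 by omega)
    have h3 : 2 * n + 1 - (n + 1) = n := by omega
    rw [h3] at h4
    exact h4
  simp only [Nat.succ_eq_add_one, show n + 1 + 1 = n + 2 from rfl] at h hsym ⊢
  omega

/-- The coefficients of the linear functional that kills the image of `A_d`. -/
noncomputable def lam (d j : ℕ) : ℝ := (-1) ^ (d + 1 - j) * (catalan (d + 2 - j) : ℝ)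

/-- The functional itself. -/
noncomputable def Phi (d : ℕ) (q : Polynomial ℝ) : ℝ :=
  ∑ j ∈ Finset.range (d + 2), lam d j * q.coeff j

lemma lam_shift (d j : ℕ) : lam (d + 1) (j + 1) = lam d j := by
  unfold lam
  rw [show d + 1 + 1 - (j + 1) = d + 1 - j by omega,
    show d + 1 + 2 - (j + 1) = d + 2 - j by omega]

lemma Phi_add (d : ℕ) (p q : Polynomial ℝ) : Phi d (p + q) = Phi d p + Phi d q := by
  simp [Phi, mul_add, Finset.sum_add_distrib]

lemma Phi_sub (d : ℕ) (p q : Polynomial ℝ) : Phi d (p - q) = Phi d p - Phi d q := by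
  simp [Phi, mul_sub, Finset.sum_sub_distrib]

lemma Phi_C_mul (d : ℕ) (c : ℝ) (q : Polynomial ℝ) :
    Phi d (Polynomial.C c * q) = c * Phi d q := by
  simp only [Phi, Polynomial.coeff_C_mul, Finset.mul_sum]
  exact Finset.sum_congr rfl fun j _ => by ring

lemma Phi_sum (d : ℕ) {ι : Type*} (s : Finset ι) (f : ι → Polynomial ℝ) :
    Phi d (∑ i ∈ s, f i) = ∑ i ∈ s, Phi d (f i) := by
  simp only [Phi, Polynomial.finset_sum_coeff, Finset.mul_sum]
  exact Finset.sum_comm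

lemma Phi_X_mul (d : ℕ) (r : Polynomial ℝ) : Phi (d + 1) (Polynomial.X * r) = Phi d r := by
  unfold Phi
  rw [show d + 1 + 2 = (d + 2) + 1 from rfl, Finset.sum_range_succ']
  simp only [Polynomial.coeff_X_mul, lam_shift]
  have h0 : (Polynomial.X * r).coeff 0 = 0 := by
    rw [Polynomial.mul_coeff_zero, Polynomial.coeff_X_zero, zero_mul]
  rw [h0, mul_zero, add_zero]

/-- Closed form for `Phi d (P n)`. -/
noncomputable def F (d n : ℕ) : ℝ :=
  (Nat.choose (n - (d + 2)) (d + 1) : ℝ) +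
    (-1) ^ (d + 1) *
      ((Nat.choose (2 * d + 3 - n) (d + 2) : ℝ) - (Nat.choose (2 * d + 3 - n) (d + 3) : ℝ))

lemma F_zero (n : ℕ) : F 0 n = (n : ℝ) - 2 := by
  unfold F
  match n with
  | 0 => norm_num [Nat.choose]
  | 1 => norm_num [Nat.choose]
  | 2 => norm_num [Nat.choose]
  | 3 => norm_num [Nat.choose]
  | (m + 4) =>
    have h1 : m + 4 - 2 = m + 2 := by omega
    have h2 : 2 * 0 + 3 - (m + 4) = 0 := by omega
    rw [h1, h2]
    simp [Nat.choose_one_right, Nat.choose]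
    push_cast
    ring

lemma F_rec (d n : ℕ) : F (d + 1) (n + 2) = F (d + 1) (n + 1) + F d n := by
  have hA : (Nat.choose (n + 2 - (d + 3)) (d + 2) : ℝ) =
      (Nat.choose (n + 1 - (d + 3)) (d + 2) : ℝ) + (Nat.choose (n - (d + 2)) (d + 1) : ℝ) := by
    rcases le_or_gt (d + 2) n with h | h
    · obtain ⟨m, rfl⟩ : ∃ m, n = d + 2 + m := ⟨n - (d + 2), by omega⟩
      have e1 : d + 2 + m + 2 - (d + 3) = m + 1 := by omega
      have e2 : d + 2 + m + 1 - (d + 3) = m := by omega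
      have e3 : d + 2 + m - (d + 2) = m := by omega
      rw [e1, e2, e3, Nat.choose_succ_succ m (d + 1)]
      push_cast; ring
    · have e2 : n + 1 - (d + 3) = 0 := by omega
      have e3 : n - (d + 2) = 0 := by omega
      have z1 : Nat.choose (n + 2 - (d + 3)) (d + 2) = 0 :=
        Nat.choose_eq_zero_of_lt (by omega)
      have z2 : Nat.choose 0 (d + 2) = 0 := Nat.choose_eq_zero_of_lt (by omega)
      have z3 : Nat.choose 0 (d + 1) = 0 := Nat.choose_eq_zero_of_lt (by omega)
      rw [e2, e3, z1, z2, z3]; norm_num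
  have hB : ((Nat.choose (2 * (d + 1) + 3 - (n + 2)) (d + 3) : ℝ) -
        (Nat.choose (2 * (d + 1) + 3 - (n + 2)) (d + 4) : ℝ)) +
      ((Nat.choose (2 * d + 3 - n) (d + 2) : ℝ) - (Nat.choose (2 * d + 3 - n) (d + 3) : ℝ)) =
      ((Nat.choose (2 * (d + 1) + 3 - (n + 1)) (d + 3) : ℝ) -
        (Nat.choose (2 * (d + 1) + 3 - (n + 1)) (d + 4) : ℝ)) := by
    rcases le_or_gt n (2 * d + 2) with h | h
    · have e1 : 2 * (d + 1) + 3 - (n + 2) = 2 * d + 3 - n := by omega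
      have e2 : 2 * (d + 1) + 3 - (n + 1) = (2 * d + 3 - n) + 1 := by omega
      rw [e1, e2]
      rw [Nat.choose_succ_succ (2 * d + 3 - n) (d + 2),
        Nat.choose_succ_succ (2 * d + 3 - n) (d + 3)]
      push_cast; ring
    · have e1 : 2 * (d + 1) + 3 - (n + 2) = 0 := by omega
      have e2 : 2 * d + 3 - n = 0 := by omega
      have z1 : Nat.choose (2 * (d + 1) + 3 - (n + 1)) (d + 3) = 0 :=
        Nat.choose_eq_zero_of_lt (by omega)
      have z2 : Nat.choose (2 * (d + 1) + 3 - (n + 1)) (d + 4) = 0 :=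
        Nat.choose_eq_zero_of_lt (by omega)
      rw [e1, e2, z1, z2]
      norm_num [Nat.choose]
  unfold F
  simp only [show d + 1 + 2 = d + 3 from rfl, show d + 1 + 1 = d + 2 from rfl,
    show d + 1 + 3 = d + 4 from rfl]
  linear_combination hA + (-1 : ℝ) ^ (d + 2) * hB

lemma P_coeff_zero (n : ℕ) : (P n).coeff 0 = 1 := by
  induction n using Nat.twoStepInduction with
  | zero => simp [P]
  | one => simp [P]
  | more n ih1 ih2 =>
    rw [show P (n + 2) = P (n + 1) + Polynomial.X * P n from rfl]
    rw [Polynomial.coeff_add, ih2, Polynomial.mul_coeff_zero, Polynomial.coeff_X_zero]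
    ring

lemma Phi_one (d : ℕ) : Phi d 1 = lam d 0 := by
  unfold Phi
  rw [Finset.sum_eq_single 0]
  · simp
  · intro j _ hj
    rcases Nat.exists_eq_succ_of_ne_zero hj with ⟨m, rfl⟩
    simp [Polynomial.coeff_one]
  · intro h; simp at h

lemma catalan_two' : catalan 2 = 2 := by simp [catalan_succ, Finset.sum_range_succ]

lemma Phi_P (d : ℕ) : ∀ n, Phi d (P n) = F d n := by
  induction d with
  | zero =>
    intro n
    rw [F_zero]
    induction n using Nat.twoStepInduction with
    | zero =>
      rw [show P 0 = 1 from rfl, Phi_one]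
      unfold lam
      norm_num [catalan_two']
    | one =>
      rw [show P 1 = 1 + Polynomial.X from rfl]
      unfold Phi
      simp [Finset.sum_range_succ, lam, catalan_two', Polynomial.coeff_one]
      norm_num
    | more n ih1 ih2 =>
      rw [show P (n + 2) = P (n + 1) + Polynomial.X * P n from rfl, Phi_add, ih2]
      have hx : Phi 0 (Polynomial.X * P n) = 1 := by
        unfold Phi
        rw [Finset.sum_range_succ, Finset.sum_range_succ, Finset.sum_range_zero]
        have h0 : (Polynomial.X * P n).coeff 0 = 0 := by
          rw [Polynomial.mul_coeff_zero, Polynomial.coeff_X_zero, zero_mul]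
        rw [h0, show (1 : ℕ) = 0 + 1 from rfl, Polynomial.coeff_X_mul, P_coeff_zero]
        unfold lam
        norm_num
      rw [hx]
      push_cast
      ring
  | succ d ih =>
    intro n
    induction n using Nat.twoStepInduction with
    | zero =>
      rw [show P 0 = 1 from rfl, Phi_one]
      unfold lam F
      have e0 : 0 - (d + 1 + 2) = 0 := by omega
      have e1 : d + 1 + 1 - 0 = d + 2 := by omega
      have e2 : d + 1 + 2 - 0 = d + 3 := by omega
      have e3 : 2 * (d + 1) + 3 - 0 = 2 * (d + 2) + 1 := by omega
      rw [e0, e1, e2, e3]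
      have hz : Nat.choose 0 (d + 1 + 1) = 0 := Nat.choose_eq_zero_of_lt (by omega)
      rw [hz]
      have hco := cat_odd (d + 2)
      have h1 : (catalan (d + 3) : ℝ) =
          (Nat.choose (2 * (d + 2) + 1) (d + 3) : ℝ) -
            (Nat.choose (2 * (d + 2) + 1) (d + 4) : ℝ) := by
        have h5 := congrArg (fun x : ℕ => (x : ℝ)) hco
        push_cast at h5
        push_cast
        linarith
      simp only [show d + 1 + 2 = d + 3 from rfl, show d + 1 + 3 = d + 4 from rfl,
        show d + 2 + 1 = d + 3 from rfl, show d + 2 + 2 = d + 4 from rfl] at h1 ⊢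
      rw [h1]
      push_cast
      ring
    | one =>
      rw [show P 1 = 1 + Polynomial.X from rfl]
      unfold Phi
      have hsplit : ∀ j ∈ Finset.range (d + 1 + 2),
          lam (d + 1) j * (1 + Polynomial.X).coeff j =
            (if j = 0 then lam (d + 1) 0 else 0) + (if j = 1 then lam (d + 1) 1 else 0) := by
        intro j _
        match j with
        | 0 => simp
        | 1 => simp [Polynomial.coeff_one, Polynomial.coeff_X]
        | (m + 2) => simp [Polynomial.coeff_one, Polynomial.coeff_X]
      rw [Finset.sum_congr rfl hsplit, Finset.sum_add_distrib]
      rw [Finset.sum_ite_eq' (Finset.range (d + 1 + 2)) 0 (fun _ => lam (d + 1) 0)]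
      rw [Finset.sum_ite_eq' (Finset.range (d + 1 + 2)) 1 (fun _ => lam (d + 1) 1)]
      simp only [Finset.mem_range]
      rw [if_pos (by omega), if_pos (by omega)]
      unfold lam F
      have e0 : 1 - (d + 1 + 2) = 0 := by omega
      have e1 : d + 1 + 1 - 0 = d + 2 := by omega
      have e2 : d + 1 + 2 - 0 = d + 3 := by omega
      have e3 : d + 1 + 1 - 1 = d + 1 := by omega
      have e4 : d + 1 + 2 - 1 = d + 2 := by omega
      have e5 : 2 * (d + 1) + 3 - 1 = 2 * (d + 2) := by omega
      rw [e0, e1, e2, e3, e4, e5]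
      have hz : Nat.choose 0 (d + 1 + 1) = 0 := Nat.choose_eq_zero_of_lt (by omega)
      rw [hz]
      have h1 : (catalan (d + 3) : ℝ) =
          (Nat.choose (2 * (d + 2)) (d + 2) : ℝ) - (Nat.choose (2 * (d + 2)) (d + 4) : ℝ) := by
        have hco := cat_odd (d + 2)
        have p1 : Nat.choose (2 * (d + 2) + 1) (d + 3) =
            Nat.choose (2 * (d + 2)) (d + 2) + Nat.choose (2 * (d + 2)) (d + 3) :=
          Nat.choose_succ_succ (2 * (d + 2)) (d + 2)
        have p2 : Nat.choose (2 * (d + 2) + 1) (d + 4) =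
            Nat.choose (2 * (d + 2)) (d + 3) + Nat.choose (2 * (d + 2)) (d + 4) :=
          Nat.choose_succ_succ (2 * (d + 2)) (d + 3)
        simp only [show d + 2 + 1 = d + 3 from rfl, show d + 2 + 2 = d + 4 from rfl,
          show d + 3 + 1 = d + 4 from rfl] at hco p1 p2
        have h5 := congrArg (fun x : ℕ => (x : ℝ)) hco
        push_cast at h5
        push_cast
        rw [p1, p2] at h5
        push_cast at h5
        linarith
      have h2 : (catalan (d + 2) : ℝ) =
          (Nat.choose (2 * (d + 2)) (d + 2) : ℝ) - (Nat.choose (2 * (d + 2)) (d + 3) : ℝ) := by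
        have hce := cat_even (d + 2)
        have h5 := congrArg (fun x : ℕ => (x : ℝ)) hce
        push_cast at h5
        push_cast
        simp only [show d + 2 + 1 = d + 3 from rfl] at h5
        linarith
      simp only [show d + 1 + 2 = d + 3 from rfl, show d + 1 + 3 = d + 4 from rfl] at *
      rw [h1, h2]
      push_cast
      try ring
    | more n ih1 ih2 =>
      rw [show P (n + 2) = P (n + 1) + Polynomial.X * P n from rfl, Phi_add, ih2,
        Phi_X_mul, ih, F_rec]

lemma Phi_Amon : ∀ d k, Phi d (Amon d k) = 0 := by
  intro d
  induction d with
  | zero =>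
    intro k
    match k with
    | 0 =>
      rw [show Amon 0 0 = 1 + 2 * Polynomial.X from rfl]
      unfold Phi
      rw [Finset.sum_range_succ, Finset.sum_range_succ, Finset.sum_range_zero]
      simp [lam, catalan_two', Polynomial.coeff_one, Polynomial.coeff_X]
    | (k + 1) =>
      rw [show Amon 0 (k + 1) = 0 from rfl]
      simp [Phi]
  | succ d ih =>
    intro k
    match k with
    | (k + 1) =>
      rw [show Amon (d + 1) (k + 1) = Polynomial.X * Amon d k from rfl, Phi_X_mul, ih]
    | 0 =>
      rw [show Amon (d + 1) 0 = P (2 * d + 3) -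
          ∑ k ∈ Finset.range (d + 1),
            Polynomial.C ((P (2 * d + 1)).coeff (k + 1)) * (Polynomial.X * Amon d k) from rfl]
      rw [Phi_sub, Phi_sum]
      have hz : ∀ k ∈ Finset.range (d + 1),
          Phi (d + 1) (Polynomial.C ((P (2 * d + 1)).coeff (k + 1)) *
            (Polynomial.X * Amon d k)) = 0 := by
        intro k _
        rw [Phi_C_mul, Phi_X_mul, ih, mul_zero]
      rw [Finset.sum_congr rfl hz, Finset.sum_const_zero, sub_zero]
      rw [show (2 * d + 3 : ℕ) = 2 * (d + 1) + 1 by omega, Phi_P]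
      unfold F
      have e1 : 2 * (d + 1) + 1 - (d + 1 + 2) = d := by omega
      have e2 : 2 * (d + 1) + 3 - (2 * (d + 1) + 1) = 2 := by omega
      rw [e1, e2]
      have z1 : Nat.choose d (d + 1 + 1) = 0 := Nat.choose_eq_zero_of_lt (by omega)
      have z2 : Nat.choose 2 (d + 1 + 2) = 0 := Nat.choose_eq_zero_of_lt (by omega)
      have z3 : Nat.choose 2 (d + 1 + 3) = 0 := Nat.choose_eq_zero_of_lt (by omega)
      rw [z1, z2, z3]
      norm_num

theorem not_in_image_A (d : ℕ) (hd : 1 ≤ d) :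
    ¬ ∃ p : Polynomial ℝ, p.natDegree ≤ d ∧
      Aap d p = Polynomial.X ^ (d + 1) + Polynomial.X ^ d := by
  rintro ⟨p, hdeg, heq⟩
  have h1 : Phi d (Aap d p) = 0 := by
    unfold Aap
    rw [Phi_sum]
    apply Finset.sum_eq_zero
    intro k _
    rw [Phi_C_mul, Phi_Amon, mul_zero]
  have hXpow : ∀ e : ℕ, e < d + 2 → Phi d (Polynomial.X ^ e) = lam d e := by
    intro e he
    unfold Phi
    rw [Finset.sum_eq_single e]
    · simp [Polynomial.coeff_X_pow]
    · intro j _ hj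
      rw [Polynomial.coeff_X_pow, if_neg hj, mul_zero]
    · intro h; exact absurd (Finset.mem_range.mpr he) h
  have h2 : Phi d (Polynomial.X ^ (d + 1) + Polynomial.X ^ d) = -1 := by
    rw [Phi_add, hXpow (d + 1) (by omega), hXpow d (by omega)]
    unfold lam
    rw [show d + 1 - (d + 1) = 0 by omega, show d + 2 - (d + 1) = 1 by omega,
      show d + 1 - d = 1 by omega, show d + 2 - d = 2 by omega]
    norm_num [catalan_two']
  rw [heq, h2] at h1
  norm_num at h1
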